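/- arXiv:math/0401061 — 2 statements merged into one kernel-verified Lean document; each statement's English description precedes it below -/
import Mathlib

section
/- Let n ≥ 5 and for ε ∈ (0,1) define I(ε) = ∫_{ℝⁿ} (1+|x|²)^{-(n - ε(n-4)/2)} (1−|x|²)/(1+|x|²) dx. Then I(ε) = −c̃₂ ε + O(ε²) as ε → 0, where c̃₂ = (n-4)/2 ∫_{ℝⁿ} log(1+|x|²)(|x|²−1)(1+|x|²)^{-(n+1)} dx > 0; in particular I(0) = 0. -/
open MeasureTheory Real Filter Metric Topology Asymptotics Set

noncomputable section

/-- The (pointwise) Laplacian of `f : ℝⁿ → ℝ`. -/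
def lap (n : ℕ) (f : EuclideanSpace ℝ (Fin n) → ℝ) (x : EuclideanSpace ℝ (Fin n)) : ℝ :=
  ∑ i : Fin n, fderiv ℝ (fun y => fderiv ℝ f y (EuclideanSpace.single i 1)) x
    (EuclideanSpace.single i 1)

/-- The constant `c₀ = [(n-4)(n-2)n(n+2)]^{(n-4)/8}`. -/
def c0 (n : ℕ) : ℝ :=
  (((n : ℝ) - 4) * ((n : ℝ) - 2) * (n : ℝ) * ((n : ℝ) + 2)) ^ (((n : ℝ) - 4) / 8)

/-- The standard bubble `δ_{a,λ}`. -/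
def deltaFn (n : ℕ) (a : EuclideanSpace ℝ (Fin n)) (l : ℝ)
    (x : EuclideanSpace ℝ (Fin n)) : ℝ :=
  c0 n * l ^ (((n : ℝ) - 4) / 2) / (1 + l ^ 2 * ‖x - a‖ ^ 2) ^ (((n : ℝ) - 4) / 2)

/-- The best biharmonic Sobolev constant on `ℝⁿ`. -/
def bestS (n : ℕ) : ℝ :=
  sInf { r : ℝ | ∃ u : EuclideanSpace ℝ (Fin n) → ℝ,
    MemLp (lap n u) 2 (volume : Measure (EuclideanSpace ℝ (Fin n))) ∧
    MemLp u (ENNReal.ofReal (2 * (n : ℝ) / ((n : ℝ) - 4))) volume ∧ u ≠ 0 ∧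
    r = (∫ x, (lap n u x) ^ 2) /
      ((∫ x, |u x| ^ (2 * (n : ℝ) / ((n : ℝ) - 4))) ^ (((n : ℝ) - 4) / (n : ℝ))) }

/-- The integral `I(ε)` of Statement 7. -/
def Ifun (n : ℕ) (ε : ℝ) : ℝ :=
  ∫ x : EuclideanSpace ℝ (Fin n),
    (1 + ‖x‖ ^ 2) ^ (-((n : ℝ) - ε * ((n : ℝ) - 4) / 2)) *
      ((1 - ‖x‖ ^ 2) / (1 + ‖x‖ ^ 2))

/-- The constant `c̃₂` of Statement 7. -/
def c2tilde (n : ℕ) : ℝ :=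
  (((n : ℝ) - 4) / 2) * ∫ x : EuclideanSpace ℝ (Fin n),
    Real.log (1 + ‖x‖ ^ 2) * (‖x‖ ^ 2 - 1) * (1 + ‖x‖ ^ 2) ^ (-((n : ℝ) + 1))


lemma abs_pow_le_aux (r : ℝ) (k : ℕ) : |r| ^ k ≤ (1 + r ^ 2) ^ ((k : ℝ) / 2) := by
  have h0 : (0:ℝ) < 1 + r ^ 2 := by positivity
  have h1 : |r| ≤ (1 + r ^ 2) ^ ((1:ℝ) / 2) :=
    calc |r| = (|r| ^ (2:ℕ)) ^ ((1:ℝ)/2) := by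
          rw [← Real.rpow_natCast |r| 2, ← Real.rpow_mul (abs_nonneg r)]; norm_num
      _ ≤ (1 + r ^ 2) ^ ((1:ℝ)/2) :=
          Real.rpow_le_rpow (by positivity) (by rw [sq_abs]; nlinarith) (by norm_num)
  calc |r| ^ k ≤ ((1 + r ^ 2) ^ ((1:ℝ)/2)) ^ k := pow_le_pow_left₀ (abs_nonneg r) h1 k
    _ = (1 + r ^ 2) ^ ((k:ℝ)/2) := by
        rw [← Real.rpow_natCast ((1 + r ^ 2) ^ ((1:ℝ)/2)) k, ← Real.rpow_mul h0.le]
        congr 1; ring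

lemma log_le_aux {u : ℝ} (hu : 1 ≤ u) : Real.log u ≤ 2 * u ^ ((1:ℝ)/2) := by
  have h0 : (0:ℝ) < u := lt_of_lt_of_le one_pos hu
  have h2 := Real.log_le_sub_one_of_pos (Real.rpow_pos_of_pos h0 ((1:ℝ)/2))
  have h3 : Real.log (u ^ ((1:ℝ)/2)) = (1/2) * Real.log u := Real.log_rpow h0 _
  linarith

lemma sq_log_le_aux {u : ℝ} (hu : 1 ≤ u) : (Real.log u) ^ 2 ≤ 4 * u := by
  have h0 : (0:ℝ) < u := lt_of_lt_of_le one_pos hu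
  have h1 := log_le_aux hu
  have hl := Real.log_nonneg hu
  calc (Real.log u) ^ 2 ≤ (2 * u ^ ((1:ℝ)/2)) ^ 2 := by nlinarith
    _ = 4 * (u ^ ((1:ℝ)/2)) ^ (2:ℕ) := by ring
    _ = 4 * u := by
        rw [← Real.rpow_natCast (u ^ ((1:ℝ)/2)) 2, ← Real.rpow_mul h0.le]; norm_num

lemma exp_taylor_aux {t : ℝ} (ht : 0 ≤ t) :
    |Real.exp t - 1 - t| ≤ t ^ 2 * Real.exp t := by
  have h0 : t + 1 ≤ Real.exp t := Real.add_one_le_exp t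
  have h1 : Real.exp t - 1 ≤ t * Real.exp t := by
    have h2 := Real.add_one_le_exp (-t)
    have he : Real.exp (-t) = (Real.exp t)⁻¹ := Real.exp_neg t
    have hp : (0:ℝ) < Real.exp t := Real.exp_pos t
    rw [he] at h2
    nlinarith [mul_le_mul_of_nonneg_left h2 hp.le, mul_inv_cancel₀ hp.ne']
  rw [abs_of_nonneg (by linarith)]
  nlinarith [mul_le_mul_of_nonneg_left h1 ht]


lemma integrableE (n : ℕ) {s : ℝ} (hs : (n:ℝ) < 2*s) :
    Integrable (fun x : EuclideanSpace ℝ (Fin n) => (1 + ‖x‖^2) ^ (-s)) := by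
  have h := integrable_rpow_neg_one_add_norm_sq (E := EuclideanSpace ℝ (Fin n)) (μ := volume)
      (r := 2*s) (by rw [finrank_euclideanSpace_fin]; exact hs)
  have e : ∀ x : EuclideanSpace ℝ (Fin n), ((1:ℝ) + ‖x‖^2) ^ (-(2*s)/2) = (1+‖x‖^2)^(-s) := by
    intro x; congr 1; ring
  simpa [e] using h

lemma integrableR {s : ℝ} (hs : 1 < 2*s) :
    Integrable (fun r : ℝ => (1 + r^2) ^ (-s)) := by
  have h := integrable_rpow_neg_one_add_norm_sq (E := ℝ) (μ := volume)
      (r := 2*s) (by simpa)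
  have e : (fun r : ℝ => (1 + r^2) ^ (-s)) = fun x : ℝ => ((1:ℝ) + ‖x‖^2) ^ (-(2*s)/2) := by
    funext r; rw [Real.norm_eq_abs, sq_abs]; congr 1; ring
  rw [e]; exact h

lemma contE (n : ℕ) (a : ℝ) :
    Continuous (fun x : EuclideanSpace ℝ (Fin n) => (1 + ‖x‖^2) ^ a) :=
  (continuous_const.add (continuous_norm.pow 2)).rpow_const (fun x => Or.inl (show (0:ℝ) < 1 + ‖x‖^2 by positivity).ne')

lemma contR (a : ℝ) : Continuous (fun r : ℝ => (1 + r^2) ^ a) :=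
  (continuous_const.add (continuous_pow 2)).rpow_const (fun x => Or.inl (show (0:ℝ) < 1 + x^2 by positivity).ne')



lemma hasDerivG (n : ℕ) (hn : 1 ≤ n) (r : ℝ) :
    HasDerivAt (fun r : ℝ => r ^ n * (1 + r ^ 2) ^ (-(n:ℝ)))
      ((n:ℝ) * (r ^ (n-1) * ((1 - r ^ 2) * (1 + r ^ 2) ^ (-((n:ℝ)+1))))) r := by
  have h0 : (0:ℝ) < 1 + r ^ 2 := by positivity
  have hin : HasDerivAt (fun r : ℝ => 1 + r ^ 2) (2 * r) r := by
    simpa using (hasDerivAt_pow 2 r).const_add 1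
  have hrp : HasDerivAt (fun r : ℝ => (1 + r ^ 2) ^ (-(n:ℝ)))
      ((2 * r) * (-(n:ℝ)) * (1 + r ^ 2) ^ (-(n:ℝ) - 1)) r :=
    hin.rpow_const (Or.inl h0.ne')
  have h := (hasDerivAt_pow n r).mul hrp
  refine h.congr_deriv ?_
  have e1 : (1 + r ^ 2) ^ (-(n:ℝ)) = (1 + r^2) * (1 + r ^ 2) ^ (-((n:ℝ)+1)) := by
    rw [show -(n:ℝ) = 1 + -((n:ℝ)+1) by ring, Real.rpow_add h0, Real.rpow_one]
  have e2 : (1 + r ^ 2) ^ (-(n:ℝ) - 1) = (1 + r ^ 2) ^ (-((n:ℝ)+1)) := by congr 1; ring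
  have e3 : r ^ n = r ^ (n-1) * r := by
    conv_lhs => rw [show n = (n-1)+1 by omega]
    rw [pow_succ]
  rw [e1, e2, e3]; ring

lemma hasDerivH (n : ℕ) (hn : 1 ≤ n) (r : ℝ) :
    HasDerivAt (fun r : ℝ => Real.log (1 + r ^ 2) * (r ^ n * (1 + r ^ 2) ^ (-(n:ℝ))))
      (2 * r ^ (n+1) * (1 + r ^ 2) ^ (-((n:ℝ)+1))
        + Real.log (1 + r ^ 2) *
          ((n:ℝ) * (r ^ (n-1) * ((1 - r ^ 2) * (1 + r ^ 2) ^ (-((n:ℝ)+1)))))) r := by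
  have h0 : (0:ℝ) < 1 + r ^ 2 := by positivity
  have hin : HasDerivAt (fun r : ℝ => 1 + r ^ 2) (2 * r) r := by
    simpa using (hasDerivAt_pow 2 r).const_add 1
  have hlog : HasDerivAt (fun r : ℝ => Real.log (1 + r ^ 2)) (2 * r / (1 + r ^ 2)) r :=
    hin.log h0.ne'
  have h := hlog.mul (hasDerivG n hn r)
  refine h.congr_deriv ?_
  have e1 : (1 + r ^ 2) ^ (-(n:ℝ)) = (1 + r^2) * (1 + r ^ 2) ^ (-((n:ℝ)+1)) := by
    rw [show -(n:ℝ) = 1 + -((n:ℝ)+1) by ring, Real.rpow_add h0, Real.rpow_one]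
  rw [e1]; field_simp; ring

lemma Gle (n : ℕ) (hn : 1 ≤ n) {r : ℝ} (hr : 1 ≤ r) :
    r ^ n * (1 + r ^ 2) ^ (-(n:ℝ)) ≤ r ^ (-(n:ℝ)) := by
  have h0 : (0:ℝ) < r := lt_of_lt_of_le one_pos hr
  have hb : ((1:ℝ) + r ^ 2) ^ (-(n:ℝ)) ≤ (r ^ 2) ^ (-(n:ℝ)) :=
    Real.rpow_le_rpow_of_nonpos (by positivity) (by nlinarith)
      (by simp [Nat.cast_nonneg])
  calc r ^ n * (1 + r ^ 2) ^ (-(n:ℝ)) ≤ r ^ n * (r ^ 2) ^ (-(n:ℝ)) :=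
        mul_le_mul_of_nonneg_left hb (pow_nonneg h0.le n)
    _ = r ^ (-(n:ℝ)) := by
        rw [← Real.rpow_natCast r n, ← Real.rpow_natCast r 2, ← Real.rpow_mul h0.le,
          ← Real.rpow_add h0]
        congr 1; push_cast; ring

lemma tendstoG (n : ℕ) (hn : 1 ≤ n) :
    Tendsto (fun r : ℝ => r ^ n * (1 + r ^ 2) ^ (-(n:ℝ))) atTop (𝓝 0) := by
  refine squeeze_zero_norm' (a := fun r : ℝ => r⁻¹) ?_ tendsto_inv_atTop_zero
  filter_upwards [eventually_ge_atTop (1:ℝ)] with r hr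
  have h0 : (0:ℝ) < r := lt_of_lt_of_le one_pos hr
  have h1 : r ^ n * (1 + r ^ 2) ^ (-(n:ℝ)) ≤ r ^ (-(n:ℝ)) := Gle n hn hr
  have h2 : r ^ (-(n:ℝ)) ≤ r ^ (-(1:ℝ)) := by
    apply Real.rpow_le_rpow_of_exponent_le hr
    have : (1:ℝ) ≤ (n:ℝ) := by exact_mod_cast hn
    linarith
  rw [Real.norm_eq_abs, abs_of_nonneg (by positivity)]
  calc r ^ n * (1 + r ^ 2) ^ (-(n:ℝ)) ≤ r ^ (-(1:ℝ)) := le_trans h1 h2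
    _ = r⁻¹ := Real.rpow_neg_one r

lemma tendstoH (n : ℕ) (hn : 3 ≤ n) :
    Tendsto (fun r : ℝ => Real.log (1 + r ^ 2) * (r ^ n * (1 + r ^ 2) ^ (-(n:ℝ))))
      atTop (𝓝 0) := by
  refine squeeze_zero_norm' (a := fun r : ℝ => r⁻¹) ?_ tendsto_inv_atTop_zero
  filter_upwards [eventually_ge_atTop (1:ℝ)] with r hr
  have h0 : (0:ℝ) < r := lt_of_lt_of_le one_pos hr
  have hu : (1:ℝ) ≤ 1 + r ^ 2 := by nlinarith
  have hL : Real.log (1 + r ^ 2) ≤ r ^ 2 := by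
    have := Real.log_le_sub_one_of_pos (show (0:ℝ) < 1 + r^2 by positivity)
    linarith
  have hLpos : 0 ≤ Real.log (1 + r ^ 2) := Real.log_nonneg hu
  have hGpos : 0 ≤ r ^ n * (1 + r ^ 2) ^ (-(n:ℝ)) := by positivity
  have h1 : r ^ n * (1 + r ^ 2) ^ (-(n:ℝ)) ≤ r ^ (-(n:ℝ)) := Gle n (by omega) hr
  rw [Real.norm_eq_abs, abs_of_nonneg (by positivity)]
  calc Real.log (1 + r ^ 2) * (r ^ n * (1 + r ^ 2) ^ (-(n:ℝ)))
      ≤ r ^ 2 * r ^ (-(n:ℝ)) := mul_le_mul hL h1 hGpos (by positivity)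
    _ = r ^ ((2:ℝ) + -(n:ℝ)) := by
        rw [Real.rpow_add h0, ← Real.rpow_natCast r 2]; norm_num
    _ ≤ r ^ (-(1:ℝ)) := by
        apply Real.rpow_le_rpow_of_exponent_le hr
        have : (3:ℝ) ≤ (n:ℝ) := by exact_mod_cast hn
        linarith
    _ = r⁻¹ := Real.rpow_neg_one r


-- assumed from previous chunks
lemma intOnA (n : ℕ) (hn : 5 ≤ n) : IntegrableOn
    (fun r : ℝ => r ^ (n-1) * ((1 - r^2) * (1+r^2)^(-((n:ℝ)+1)))) (Ioi 0) := by
  apply Integrable.integrableOn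
  have hint := integrableR (s := ((n:ℝ)+1)/2) (by have h5 : (5:ℝ) ≤ (n:ℝ) := (by exact_mod_cast hn); linarith)
  apply hint.mono'
  · exact (((continuous_pow (n-1)).mul ((continuous_const.sub (continuous_pow 2)).mul
      (contR _)))).aestronglyMeasurable
  · refine Eventually.of_forall fun r => ?_
    have hu0 : (0:ℝ) < 1 + r^2 := by positivity
    have h1 : |r| ^ (n-1) ≤ (1+r^2) ^ ((↑(n-1):ℝ)/2) := abs_pow_le_aux r (n-1)
    have h2 : |1 - r^2| ≤ 1 + r^2 := by rw [abs_le]; constructor <;> nlinarith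
    have h3 : (0:ℝ) ≤ (1+r^2) ^ (-((n:ℝ)+1)) := Real.rpow_nonneg hu0.le _
    calc ‖r ^ (n-1) * ((1 - r^2) * (1+r^2)^(-((n:ℝ)+1)))‖
        = |r| ^ (n-1) * (|1 - r^2| * (1+r^2)^(-((n:ℝ)+1))) := by
          rw [Real.norm_eq_abs, abs_mul, abs_mul, abs_pow, abs_of_nonneg h3]
      _ ≤ (1+r^2) ^ ((↑(n-1):ℝ)/2) * ((1+r^2) * (1+r^2)^(-((n:ℝ)+1))) := by
          apply mul_le_mul h1 (mul_le_mul_of_nonneg_right h2 h3) (by positivity)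
            (Real.rpow_nonneg hu0.le _)
      _ = (1+r^2) ^ ((↑(n-1):ℝ)/2 + (1 + -((n:ℝ)+1))) := by
          rw [Real.rpow_add hu0, Real.rpow_add hu0, Real.rpow_one]
      _ = (1+r^2) ^ (-(((n:ℝ)+1)/2)) := by
          congr 1
          rw [Nat.cast_sub (by omega : 1 ≤ n)]
          push_cast; ring

lemma intOnB (n : ℕ) (hn : 5 ≤ n) : IntegrableOn
    (fun r : ℝ => 2 * r^(n+1) * (1+r^2)^(-((n:ℝ)+1))) (Ioi 0) := by
  apply Integrable.integrableOn
  have hint := (integrableR (s := ((n:ℝ)+1)/2)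
    (by have h5 : (5:ℝ) ≤ (n:ℝ) := (by exact_mod_cast hn); linarith)).const_mul 2
  apply hint.mono'
  · exact ((continuous_const.mul (continuous_pow (n+1))).mul (contR _)).aestronglyMeasurable
  · refine Eventually.of_forall fun r => ?_
    have hu0 : (0:ℝ) < 1 + r^2 := by positivity
    have h1 : |r| ^ (n+1) ≤ (1+r^2) ^ ((↑(n+1):ℝ)/2) := abs_pow_le_aux r (n+1)
    have h3 : (0:ℝ) ≤ (1+r^2) ^ (-((n:ℝ)+1)) := Real.rpow_nonneg hu0.le _
    calc ‖2 * r ^ (n+1) * (1+r^2)^(-((n:ℝ)+1))‖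
        = 2 * |r| ^ (n+1) * (1+r^2)^(-((n:ℝ)+1)) := by
          rw [Real.norm_eq_abs, abs_mul, abs_mul, abs_pow, abs_of_nonneg h3, abs_two]
      _ ≤ 2 * (1+r^2) ^ ((↑(n+1):ℝ)/2) * (1+r^2)^(-((n:ℝ)+1)) := by
          apply mul_le_mul_of_nonneg_right (by linarith) h3
      _ = 2 * (1+r^2) ^ ((↑(n+1):ℝ)/2 + -((n:ℝ)+1)) := by
          rw [Real.rpow_add hu0]; ring
      _ = 2 * (1+r^2) ^ (-(((n:ℝ)+1)/2)) := by
          congr 2; push_cast; ring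

lemma intOnC (n : ℕ) (hn : 5 ≤ n) : IntegrableOn
    (fun r : ℝ => Real.log (1+r^2) * (r ^ (n-1) * ((r^2 - 1) * (1+r^2)^(-((n:ℝ)+1))))) (Ioi 0) := by
  apply Integrable.integrableOn
  have hint := (integrableR (s := (n:ℝ)/2)
    (by have h5 : (5:ℝ) ≤ (n:ℝ) := (by exact_mod_cast hn); linarith)).const_mul 2
  apply hint.mono'
  · exact (((continuous_const.add (continuous_pow 2)).log (fun x => (show (0:ℝ) < 1 + x^2 by positivity).ne')).mul
      ((continuous_pow (n-1)).mul (((continuous_pow 2).sub continuous_const).mul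
      (contR _)))).aestronglyMeasurable
  · refine Eventually.of_forall fun r => ?_
    have hu0 : (0:ℝ) < 1 + r^2 := by positivity
    have hu1 : (1:ℝ) ≤ 1 + r^2 := by nlinarith
    have h1 : |r| ^ (n-1) ≤ (1+r^2) ^ ((↑(n-1):ℝ)/2) := abs_pow_le_aux r (n-1)
    have h2 : |r^2 - 1| ≤ 1 + r^2 := by rw [abs_le]; constructor <;> nlinarith
    have h3 : (0:ℝ) ≤ (1+r^2) ^ (-((n:ℝ)+1)) := Real.rpow_nonneg hu0.le _
    have hL : |Real.log (1+r^2)| ≤ 2 * (1+r^2) ^ ((1:ℝ)/2) := by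
      rw [abs_of_nonneg (Real.log_nonneg hu1)]; exact log_le_aux hu1
    calc ‖Real.log (1+r^2) * (r ^ (n-1) * ((r^2 - 1) * (1+r^2)^(-((n:ℝ)+1))))‖
        = |Real.log (1+r^2)| * (|r| ^ (n-1) * (|r^2 - 1| * (1+r^2)^(-((n:ℝ)+1)))) := by
          rw [Real.norm_eq_abs, abs_mul, abs_mul, abs_mul, abs_pow, abs_of_nonneg h3]
      _ ≤ (2 * (1+r^2) ^ ((1:ℝ)/2)) * ((1+r^2) ^ ((↑(n-1):ℝ)/2) * ((1+r^2) * (1+r^2)^(-((n:ℝ)+1)))) := by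
          apply mul_le_mul hL _ (by positivity) (by positivity)
          apply mul_le_mul h1 (mul_le_mul_of_nonneg_right h2 h3) (by positivity)
            (Real.rpow_nonneg hu0.le _)
      _ = 2 * (1+r^2) ^ ((1:ℝ)/2 + ((↑(n-1):ℝ)/2 + (1 + -((n:ℝ)+1)))) := by
          rw [Real.rpow_add hu0, Real.rpow_add hu0, Real.rpow_add hu0, Real.rpow_one]; ring
      _ = 2 * (1+r^2) ^ (-((n:ℝ)/2)) := by
          congr 2
          rw [Nat.cast_sub (by omega : 1 ≤ n)]
          push_cast; ring

lemma radA (n : ℕ) (hn : 5 ≤ n) :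
    ∫ r in Ioi (0:ℝ), r ^ (n-1) * ((1 - r^2) * (1+r^2)^(-((n:ℝ)+1))) = 0 := by
  have hG0 : (fun r : ℝ => r ^ n * (1+r^2)^(-(n:ℝ))) 0 = 0 := by
    norm_num [zero_pow (show n ≠ 0 by omega)]
  have h1 : ∫ r in Ioi (0:ℝ), (n:ℝ) * (r ^ (n-1) * ((1 - r^2) * (1+r^2)^(-((n:ℝ)+1))))
      = 0 - (fun r : ℝ => r ^ n * (1+r^2)^(-(n:ℝ))) 0 :=
    integral_Ioi_of_hasDerivAt_of_tendsto
      (f := fun r : ℝ => r ^ n * (1+r^2)^(-(n:ℝ)))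
      (f' := fun r : ℝ => (n:ℝ) * (r ^ (n-1) * ((1 - r^2) * (1+r^2)^(-((n:ℝ)+1)))))
      ((continuous_pow n).mul (contR _)).continuousWithinAt
      (fun x _ => hasDerivG n (by omega) x)
      ((intOnA n hn).const_mul _)
      (tendstoG n (by omega))
  rw [hG0, sub_zero, integral_const_mul] at h1
  have hn0 : (n:ℝ) ≠ 0 := by positivity
  exact (mul_eq_zero.mp h1).resolve_left hn0

lemma radBC (n : ℕ) (hn : 5 ≤ n) :
    (n:ℝ) * ∫ r in Ioi (0:ℝ), Real.log (1+r^2) * (r ^ (n-1) * ((r^2 - 1) * (1+r^2)^(-((n:ℝ)+1))))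
      = ∫ r in Ioi (0:ℝ), 2 * r^(n+1) * (1+r^2)^(-((n:ℝ)+1)) := by
  have e : (fun r : ℝ => 2 * r^(n+1) * (1+r^2)^(-((n:ℝ)+1)) + Real.log (1+r^2) *
        ((n:ℝ) * (r^(n-1) * ((1 - r^2) * (1+r^2)^(-((n:ℝ)+1))))))
      = (fun r : ℝ => 2 * r^(n+1) * (1+r^2)^(-((n:ℝ)+1)) - (n:ℝ) * (Real.log (1+r^2) *
        (r^(n-1) * ((r^2 - 1) * (1+r^2)^(-((n:ℝ)+1)))))) := by
    funext r; ring
  have hH0 : (fun r : ℝ => Real.log (1+r^2) * (r ^ n * (1+r^2)^(-(n:ℝ)))) 0 = 0 := by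
    norm_num
  have h1 : ∫ r in Ioi (0:ℝ), (2 * r^(n+1) * (1+r^2)^(-((n:ℝ)+1)) + Real.log (1+r^2) *
        ((n:ℝ) * (r^(n-1) * ((1 - r^2) * (1+r^2)^(-((n:ℝ)+1))))))
      = 0 - (fun r : ℝ => Real.log (1+r^2) * (r ^ n * (1+r^2)^(-(n:ℝ)))) 0 :=
    integral_Ioi_of_hasDerivAt_of_tendsto
      (f := fun r : ℝ => Real.log (1+r^2) * (r ^ n * (1+r^2)^(-(n:ℝ))))
      (f' := fun r : ℝ => 2 * r^(n+1) * (1+r^2)^(-((n:ℝ)+1)) + Real.log (1+r^2) *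
        ((n:ℝ) * (r^(n-1) * ((1 - r^2) * (1+r^2)^(-((n:ℝ)+1))))))
      (((continuous_const.add (continuous_pow 2)).log (fun x => (show (0:ℝ) < 1 + x^2 by positivity).ne')).mul
        ((continuous_pow n).mul (contR _))).continuousWithinAt
      (fun x _ => hasDerivH n (by omega) x)
      (by rw [e]; exact (intOnB n hn).sub ((intOnC n hn).const_mul _))
      (tendstoH n (by omega))
  rw [hH0, sub_zero, e] at h1
  rw [integral_sub (intOnB n hn) ((intOnC n hn).const_mul _), integral_const_mul] at h1
  linarith

lemma radBpos (n : ℕ) (hn : 5 ≤ n) :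
    0 < ∫ r in Ioi (0:ℝ), 2 * r^(n+1) * (1+r^2)^(-((n:ℝ)+1)) := by
  rw [setIntegral_pos_iff_support_of_nonneg_ae _ (intOnB n hn)]
  · apply lt_of_lt_of_le _ (measure_mono (show Ioi (0:ℝ) ⊆
        Function.support (fun r : ℝ => 2 * r^(n+1) * (1+r^2)^(-((n:ℝ)+1))) ∩ Ioi 0 from ?_))
    · simp [Real.volume_Ioi]
    · intro r hr
      refine ⟨?_, hr⟩
      have hr0 : (0:ℝ) < r := hr
      have : (0:ℝ) < 2 * r^(n+1) * (1+r^2)^(-((n:ℝ)+1)) := by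
        apply mul_pos (by positivity) (Real.rpow_pos_of_pos (by positivity) _)
      exact ne_of_gt this
  · rw [EventuallyLE, ae_restrict_iff' measurableSet_Ioi]
    refine Eventually.of_forall fun r hr => ?_
    have hr0 : (0:ℝ) ≤ r := le_of_lt hr
    exact mul_nonneg (mul_nonneg (by norm_num) (pow_nonneg hr0 _))
      (Real.rpow_nonneg (by positivity) _)




lemma polarE (n : ℕ) (hn : 5 ≤ n) (g : ℝ → ℝ) :
    ∫ x : EuclideanSpace ℝ (Fin n), g ‖x‖ =
      (n : ℝ) * (volume (ball (0:EuclideanSpace ℝ (Fin n)) 1)).toReal *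
        ∫ r in Ioi (0:ℝ), r ^ (n-1) * g r := by
  haveI : Nonempty (Fin n) := Fin.pos_iff_nonempty.mp (by omega)
  rw [integral_fun_norm_addHaar (volume : Measure (EuclideanSpace ℝ (Fin n))) g]
  rw [finrank_euclideanSpace_fin]
  simp only [nsmul_eq_mul, smul_eq_mul, measureReal_def]
  ring

def hfun (n : ℕ) (x : EuclideanSpace ℝ (Fin n)) : ℝ :=
  (1 - ‖x‖^2) * (1 + ‖x‖^2) ^ (-((n:ℝ)+1))

def gfun (n : ℕ) (x : EuclideanSpace ℝ (Fin n)) : ℝ :=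
  Real.log (1 + ‖x‖^2) * hfun n x

def ffun (n : ℕ) (ε : ℝ) (x : EuclideanSpace ℝ (Fin n)) : ℝ :=
  (1 + ‖x‖^2) ^ (ε * ((n:ℝ)-4)/2) * hfun n x

lemma cont_h (n : ℕ) : Continuous (hfun n) :=
  (continuous_const.sub (continuous_norm.pow 2)).mul (contE n _)

lemma abs_h_le (n : ℕ) (x : EuclideanSpace ℝ (Fin n)) :
    |hfun n x| ≤ (1 + ‖x‖^2) ^ (-(n:ℝ)) := by
  have hu0 : (0:ℝ) < 1 + ‖x‖^2 := by positivity
  have h2 : |1 - ‖x‖^2| ≤ 1 + ‖x‖^2 := by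
    rw [abs_le]; constructor <;> nlinarith [sq_nonneg ‖x‖]
  have h3 : (0:ℝ) ≤ (1+‖x‖^2) ^ (-((n:ℝ)+1)) := Real.rpow_nonneg hu0.le _
  calc |hfun n x| = |1 - ‖x‖^2| * (1+‖x‖^2) ^ (-((n:ℝ)+1)) := by
        rw [hfun, abs_mul, abs_of_nonneg h3]
    _ ≤ (1+‖x‖^2) * (1+‖x‖^2) ^ (-((n:ℝ)+1)) := mul_le_mul_of_nonneg_right h2 h3
    _ = (1+‖x‖^2) ^ (1 + -((n:ℝ)+1)) := by rw [Real.rpow_add hu0, Real.rpow_one]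
    _ = (1+‖x‖^2) ^ (-(n:ℝ)) := by congr 1; ring

lemma int_h (n : ℕ) (hn : 5 ≤ n) : Integrable (hfun n) := by
  have hint := integrableE n (s := (n:ℝ))
    (by have h5 : (5:ℝ) ≤ (n:ℝ) := (by exact_mod_cast hn); linarith)
  exact hint.mono' (cont_h n).aestronglyMeasurable
    (Eventually.of_forall fun x => by rw [Real.norm_eq_abs]; exact abs_h_le n x)

lemma int_g (n : ℕ) (hn : 5 ≤ n) : Integrable (gfun n) := by
  have hint := (integrableE n (s := (n:ℝ) - 1/2)
    (by have h5 : (5:ℝ) ≤ (n:ℝ) := (by exact_mod_cast hn); linarith)).const_mul 2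
  apply hint.mono'
  · exact (((continuous_const.add (continuous_norm.pow 2)).log
      (fun x => by have h : (0:ℝ) < 1 + ‖x‖^2 := by positivity
                   exact h.ne')).mul (cont_h n)).aestronglyMeasurable
  · refine Eventually.of_forall fun x => ?_
    have hu0 : (0:ℝ) < 1 + ‖x‖^2 := by positivity
    have hu1 : (1:ℝ) ≤ 1 + ‖x‖^2 := by nlinarith [sq_nonneg ‖x‖]
    have hL : |Real.log (1+‖x‖^2)| ≤ 2 * (1+‖x‖^2) ^ ((1:ℝ)/2) := by
      rw [abs_of_nonneg (Real.log_nonneg hu1)]; exact log_le_aux hu1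
    calc ‖gfun n x‖ = |Real.log (1+‖x‖^2)| * |hfun n x| := by
          rw [gfun, Real.norm_eq_abs, abs_mul]
      _ ≤ (2 * (1+‖x‖^2) ^ ((1:ℝ)/2)) * (1+‖x‖^2) ^ (-(n:ℝ)) :=
          mul_le_mul hL (abs_h_le n x) (abs_nonneg _) (by positivity)
      _ = 2 * (1+‖x‖^2) ^ ((1:ℝ)/2 + -(n:ℝ)) := by rw [Real.rpow_add hu0]; ring
      _ = 2 * (1+‖x‖^2) ^ (-((n:ℝ) - 1/2)) := by congr 2; ring

lemma int_f (n : ℕ) (hn : 5 ≤ n) {ε : ℝ} (hε0 : 0 ≤ ε) (hε1 : ε ≤ 1) :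
    Integrable (ffun n ε) := by
  have hint := integrableE n (s := (n:ℝ) - ((n:ℝ)-4)/2)
    (by have h5 : (5:ℝ) ≤ (n:ℝ) := (by exact_mod_cast hn); linarith)
  apply hint.mono'
  · exact ((contE n _).mul (cont_h n)).aestronglyMeasurable
  · refine Eventually.of_forall fun x => ?_
    have hu0 : (0:ℝ) < 1 + ‖x‖^2 := by positivity
    have hu1 : (1:ℝ) ≤ 1 + ‖x‖^2 := by nlinarith [sq_nonneg ‖x‖]
    have hc : (0:ℝ) ≤ ((n:ℝ)-4)/2 := by
      have h5 : (5:ℝ) ≤ (n:ℝ) := (by exact_mod_cast hn); linarith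
    have he : (1+‖x‖^2) ^ (ε * ((n:ℝ)-4)/2) ≤ (1+‖x‖^2) ^ (((n:ℝ)-4)/2) := by
      apply Real.rpow_le_rpow_of_exponent_le hu1; nlinarith
    calc ‖ffun n ε x‖ = (1+‖x‖^2) ^ (ε * ((n:ℝ)-4)/2) * |hfun n x| := by
          rw [ffun, Real.norm_eq_abs, abs_mul, abs_of_nonneg (Real.rpow_nonneg hu0.le _)]
      _ ≤ (1+‖x‖^2) ^ (((n:ℝ)-4)/2) * (1+‖x‖^2) ^ (-(n:ℝ)) :=
          mul_le_mul he (abs_h_le n x) (abs_nonneg _) (Real.rpow_nonneg hu0.le _)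
      _ = (1+‖x‖^2) ^ (((n:ℝ)-4)/2 + -(n:ℝ)) := by rw [Real.rpow_add hu0]
      _ = (1+‖x‖^2) ^ (-((n:ℝ) - ((n:ℝ)-4)/2)) := by congr 1; ring

lemma int_psi (n : ℕ) (hn : 5 ≤ n) :
    Integrable (fun x : EuclideanSpace ℝ (Fin n) =>
      ((n:ℝ)-4)^2 * (1 + ‖x‖^2) ^ (((n:ℝ)-4)/2 - (n:ℝ) + 1)) := by
  have hint := (integrableE n (s := (n:ℝ) - 1 - ((n:ℝ)-4)/2)
    (by have h5 : (5:ℝ) ≤ (n:ℝ) := (by exact_mod_cast hn); linarith)).const_mul (((n:ℝ)-4)^2)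
  have e : (fun x : EuclideanSpace ℝ (Fin n) =>
      ((n:ℝ)-4)^2 * (1 + ‖x‖^2) ^ (((n:ℝ)-4)/2 - (n:ℝ) + 1))
      = fun x : EuclideanSpace ℝ (Fin n) =>
      ((n:ℝ)-4)^2 * (1 + ‖x‖^2) ^ (-((n:ℝ) - 1 - ((n:ℝ)-4)/2)) := by
    funext x; congr 2; ring
  rw [e]; exact hint

lemma ifun_eq (n : ℕ) (ε : ℝ) : Ifun n ε = ∫ x, ffun n ε x := by
  rw [Ifun]
  congr 1; funext x
  have hu0 : (0:ℝ) < 1 + ‖x‖^2 := by positivity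
  rw [ffun, hfun]
  rw [show -((n:ℝ) - ε * ((n:ℝ)-4)/2) = ε * ((n:ℝ)-4)/2 + (-((n:ℝ)+1) + 1) by ring,
    Real.rpow_add hu0, Real.rpow_add hu0, Real.rpow_one]
  field_simp

lemma h_integral_zero (n : ℕ) (hn : 5 ≤ n) : ∫ x, hfun n x = 0 := by
  have h2 := polarE n hn (fun r : ℝ => (1 - r^2) * (1+r^2)^(-((n:ℝ)+1)))
  have : ∫ x, hfun n x
      = ∫ x : EuclideanSpace ℝ (Fin n), (fun r : ℝ => (1 - r^2) * (1+r^2)^(-((n:ℝ)+1))) ‖x‖ := rfl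
  rw [this, h2, radA n hn, mul_zero]

lemma part1 (n : ℕ) (hn : 5 ≤ n) : Ifun n 0 = 0 := by
  rw [ifun_eq]
  have e : (fun x => ffun n 0 x) = hfun n := by
    funext x; rw [ffun, zero_mul, zero_div, Real.rpow_zero, one_mul]
  rw [e, h_integral_zero n hn]

lemma c2_polar (n : ℕ) (hn : 5 ≤ n) : c2tilde n = (((n:ℝ)-4)/2) *
    ((n : ℝ) * (volume (ball (0:EuclideanSpace ℝ (Fin n)) 1)).toReal *
      ∫ r in Ioi (0:ℝ), Real.log (1+r^2) * (r ^ (n-1) * ((r^2 - 1) * (1+r^2)^(-((n:ℝ)+1))))) := by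
  rw [c2tilde]
  congr 1
  have : ∫ x : EuclideanSpace ℝ (Fin n),
      Real.log (1 + ‖x‖ ^ 2) * (‖x‖ ^ 2 - 1) * (1 + ‖x‖ ^ 2) ^ (-((n : ℝ) + 1))
      = ∫ x : EuclideanSpace ℝ (Fin n),
        (fun r : ℝ => Real.log (1 + r ^ 2) * (r ^ 2 - 1) * (1 + r ^ 2) ^ (-((n : ℝ) + 1))) ‖x‖ := rfl
  have h2 := polarE n hn (fun r : ℝ => Real.log (1 + r ^ 2) * (r ^ 2 - 1) * (1 + r ^ 2) ^ (-((n : ℝ) + 1)))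
  rw [this, h2]
  congr 1
  apply setIntegral_congr_fun measurableSet_Ioi
  intro r _
  simp only
  ring

lemma c2_pos (n : ℕ) (hn : 5 ≤ n) : 0 < c2tilde n := by
  rw [c2_polar n hn]
  have h5 : (5:ℝ) ≤ (n:ℝ) := (by exact_mod_cast hn)
  have hn0 : (0:ℝ) < (n:ℝ) := by linarith
  have hJ : 0 < ∫ r in Ioi (0:ℝ),
      Real.log (1+r^2) * (r ^ (n-1) * ((r^2 - 1) * (1+r^2)^(-((n:ℝ)+1)))) := by
    have := radBC n hn
    have hP := radBpos n hn
    nlinarith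
  have hK : 0 < (volume (ball (0:EuclideanSpace ℝ (Fin n)) 1)).toReal := by
    apply ENNReal.toReal_pos (measure_ball_pos volume _ one_pos).ne' measure_ball_lt_top.ne
  have hc : (0:ℝ) < ((n:ℝ)-4)/2 := by linarith
  exact mul_pos hc (mul_pos (mul_pos hn0 hK) hJ)

lemma c2_eq_g (n : ℕ) (hn : 5 ≤ n) :
    c2tilde n = -((((n:ℝ)-4)/2) * ∫ x, gfun n x) := by
  have e : (fun x : EuclideanSpace ℝ (Fin n) =>
      Real.log (1+‖x‖^2) * (‖x‖^2-1) * (1+‖x‖^2)^(-((n:ℝ)+1))) = fun x => -(gfun n x) := by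
    funext x; rw [gfun, hfun]; ring
  rw [c2tilde, e, integral_neg]
  ring

lemma ptwise_bound {ε c u B : ℝ} (hε0 : 0 ≤ ε) (hε1 : ε ≤ 1) (hc : 0 ≤ c) (hu : 1 ≤ u) :
    |u ^ (ε*c) * B - B - ε*c*(Real.log u * B)| ≤ ε^2 * c^2 * (4*u) * u ^ c * |B| := by
  have hu0 : (0:ℝ) < u := lt_of_lt_of_le one_pos hu
  have hL : 0 ≤ Real.log u := Real.log_nonneg hu
  have ht : 0 ≤ Real.log u * (ε*c) := by positivity
  have e0 : u ^ (ε*c) = Real.exp (Real.log u * (ε*c)) := Real.rpow_def_of_pos hu0 _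
  have key := exp_taylor_aux ht
  have h2 : Real.exp (Real.log u * (ε*c)) ≤ u ^ c := by
    rw [← e0]
    exact Real.rpow_le_rpow_of_exponent_le hu (by nlinarith)
  have h3 : (Real.log u)^2 ≤ 4*u := sq_log_le_aux hu
  have efac : u ^ (ε*c) * B - B - ε*c*(Real.log u * B)
      = (Real.exp (Real.log u * (ε*c)) - 1 - Real.log u * (ε*c)) * B := by rw [e0]; ring
  rw [efac, abs_mul]
  calc |Real.exp (Real.log u * (ε*c)) - 1 - Real.log u * (ε*c)| * |B|
      ≤ ((Real.log u * (ε*c))^2 * Real.exp (Real.log u * (ε*c))) * |B| :=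
        mul_le_mul_of_nonneg_right key (abs_nonneg B)
    _ = (Real.log u)^2 * ((ε*c)^2 * Real.exp (Real.log u * (ε*c))) * |B| := by ring
    _ ≤ (4*u) * ((ε*c)^2 * u ^ c) * |B| := by
        apply mul_le_mul_of_nonneg_right _ (abs_nonneg B)
        apply mul_le_mul h3 (mul_le_mul_of_nonneg_left h2 (by positivity)) (by positivity)
          (by positivity)
    _ = ε^2 * c^2 * (4*u) * u ^ c * |B| := by ring

lemma keybound (n : ℕ) (hn : 5 ≤ n) {ε : ℝ} (hε0 : 0 < ε) (hε1 : ε ≤ 1) :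
    ‖Ifun n ε + c2tilde n * ε‖ ≤
      (∫ x : EuclideanSpace ℝ (Fin n),
        ((n:ℝ)-4)^2 * (1+‖x‖^2)^(((n:ℝ)-4)/2 - (n:ℝ)+1)) * ε^2 := by
  have h5 : (5:ℝ) ≤ (n:ℝ) := (by exact_mod_cast hn)
  have hc : (0:ℝ) ≤ ((n:ℝ)-4)/2 := by linarith
  have intf := int_f n hn hε0.le hε1
  have inth := int_h n hn
  have intg := int_g n hn
  have intD : Integrable (fun x : EuclideanSpace ℝ (Fin n) =>
      ffun n ε x - hfun n x - ε*(((n:ℝ)-4)/2) * gfun n x) :=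
    (intf.sub inth).sub (intg.const_mul _)
  have eqI : ∫ x, (ffun n ε x - hfun n x - ε*(((n:ℝ)-4)/2) * gfun n x)
      = Ifun n ε + c2tilde n * ε := by
    have i1 : Integrable (fun x => ffun n ε x - hfun n x) volume := intf.sub inth
    have i2 : Integrable (fun x => ε*(((n:ℝ)-4)/2) * gfun n x) volume := intg.const_mul _
    have i3 := integral_sub i1 i2
    rw [integral_sub intf inth] at i3
    rw [i3, integral_const_mul, h_integral_zero n hn, ← ifun_eq n ε, c2_eq_g n hn]
    ring
  rw [← eqI]
  refine le_trans (norm_integral_le_integral_norm _) ?_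
  have step : (∫ x, ‖ffun n ε x - hfun n x - ε*(((n:ℝ)-4)/2) * gfun n x‖) ≤
      ∫ x : EuclideanSpace ℝ (Fin n),
        ε^2 * (((n:ℝ)-4)^2 * (1+‖x‖^2)^(((n:ℝ)-4)/2 - (n:ℝ)+1)) := by
    apply integral_mono intD.norm ((int_psi n hn).const_mul (ε^2))
    intro x
    have hu0 : (0:ℝ) < 1 + ‖x‖^2 := by positivity
    have hu1 : (1:ℝ) ≤ 1 + ‖x‖^2 := by nlinarith [sq_nonneg ‖x‖]
    have hpt := ptwise_bound (ε := ε) (c := ((n:ℝ)-4)/2) (u := 1+‖x‖^2) (B := hfun n x)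
      hε0.le hε1 hc hu1
    have eD : ffun n ε x - hfun n x - ε*(((n:ℝ)-4)/2) * gfun n x
        = (1+‖x‖^2) ^ (ε*(((n:ℝ)-4)/2)) * hfun n x - hfun n x
          - ε*(((n:ℝ)-4)/2)*(Real.log (1+‖x‖^2) * hfun n x) := by
      rw [ffun, gfun, show ε * ((n:ℝ)-4)/2 = ε*(((n:ℝ)-4)/2) by ring]
    show ‖ffun n ε x - hfun n x - ε*(((n:ℝ)-4)/2) * gfun n x‖ ≤ _
    rw [Real.norm_eq_abs, eD]
    refine le_trans hpt ?_
    have hB := abs_h_le n x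
    have hcol : (1+‖x‖^2) * (1+‖x‖^2) ^ (((n:ℝ)-4)/2) * (1+‖x‖^2) ^ (-(n:ℝ))
        = (1+‖x‖^2) ^ (((n:ℝ)-4)/2 - (n:ℝ) + 1) := by
      rw [show ((n:ℝ)-4)/2 - (n:ℝ) + 1 = 1 + (((n:ℝ)-4)/2 + -(n:ℝ)) by ring,
        Real.rpow_add hu0, Real.rpow_add hu0, Real.rpow_one]
      ring
    calc ε^2 * (((n:ℝ)-4)/2)^2 * (4*(1+‖x‖^2)) * (1+‖x‖^2) ^ (((n:ℝ)-4)/2) * |hfun n x|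
        ≤ ε^2 * (((n:ℝ)-4)/2)^2 * (4*(1+‖x‖^2)) * (1+‖x‖^2) ^ (((n:ℝ)-4)/2)
            * ((1+‖x‖^2) ^ (-(n:ℝ))) := by
          apply mul_le_mul_of_nonneg_left hB (by positivity)
      _ = ε^2 * (((n:ℝ)-4)^2 * ((1+‖x‖^2) * (1+‖x‖^2)^(((n:ℝ)-4)/2)
            * (1+‖x‖^2)^(-(n:ℝ)))) := by ring
      _ = ε^2 * (((n:ℝ)-4)^2 * (1+‖x‖^2)^(((n:ℝ)-4)/2 - (n:ℝ)+1)) := by rw [hcol]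
  refine le_trans step ?_
  rw [integral_const_mul]
  exact le_of_eq (mul_comm _ _)

/-- the expansion `I(ε) = -c̃₂ ε + O(ε²)` as `ε → 0⁺`, with
`c̃₂ > 0` and `I(0) = 0`. -/
theorem I_expansion (n : ℕ) (hn : 5 ≤ n) :
    Ifun n 0 = 0 ∧ 0 < c2tilde n ∧
    (fun ε : ℝ => Ifun n ε + c2tilde n * ε) =O[𝓝[>] (0 : ℝ)]
      (fun ε : ℝ => ε ^ 2) := by
  refine ⟨part1 n hn, c2_pos n hn, ?_⟩
  apply IsBigO.of_bound (∫ x : EuclideanSpace ℝ (Fin n),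
    ((n:ℝ)-4)^2 * (1+‖x‖^2)^(((n:ℝ)-4)/2 - (n:ℝ)+1))
  filter_upwards [Ioo_mem_nhdsGT_of_mem (show (0:ℝ) ∈ Ico 0 1 by norm_num)] with ε hε
  have hb := keybound n hn hε.1 hε.2.le
  have he : ‖ε^2‖ = ε^2 := by rw [Real.norm_eq_abs, abs_of_nonneg (sq_nonneg ε)]
  rw [he]
  exact hb
end
end

section
/- Let C₁, C₂ > 0, n ≥ 6, and let ε_k → 0⁺, λ_k > 0, a_k in a smooth bounded domain Ω ⊂ ℝⁿ with λ_k d(a_k,∂Ω) → ∞ and H(a_k,a_k) ≥ 0 satisfy C₁ H(a_k,a_k) λ_k^{4-n}(1+o(1)) + C₂ ε_k (1+o(1)) = O( log(λ_k d_k) (λ_k d_k)^{-n} ), where d_k = d(a_k, ∂Ω). Assume furthermore H(a,a) ≥ m d(a,∂Ω)^{4-n} for d(a,∂Ω) small, with m > 0, and H ≥ 0 on Ω × Ω. Then no such sequence exists: the relation leads to a contradiction for large k. -/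
open MeasureTheory Real Filter Metric Topology Asymptotics Set

noncomputable section

/-- the contradiction concluding the nonexistence Theorem 1.3:
no sequence can satisfy the balancing relation of Proposition 5.7. -/
theorem supercritical_contradiction (n : ℕ) (hn : 6 ≤ n)
    (Ω : Set (EuclideanSpace ℝ (Fin n))) (hΩo : IsOpen Ω)
    (hΩb : Bornology.IsBounded Ω) (hΩne : Ω.Nonempty)
    (H : EuclideanSpace ℝ (Fin n) → EuclideanSpace ℝ (Fin n) → ℝ)
    (C₁ C₂ m : ℝ) (hC₁ : 0 < C₁) (hC₂ : 0 < C₂) (hm : 0 < m)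
    (ε l : ℕ → ℝ) (a : ℕ → EuclideanSpace ℝ (Fin n)) (d : ℕ → ℝ)
    (hd : ∀ k, d k = Metric.infDist (a k) (frontier Ω))
    (hεpos : ∀ k, 0 < ε k) (hε0 : Tendsto ε atTop (𝓝 0))
    (hlpos : ∀ k, 0 < l k)
    (hld : Tendsto (fun k => l k * d k) atTop atTop)
    (ha : ∀ k, a k ∈ Ω)
    (hH0 : ∀ x ∈ Ω, ∀ y ∈ Ω, 0 ≤ H x y)
    (hHpos : ∀ x ∈ Ω, 0 < H x x)
    (hφcont : ContinuousOn (fun x => H x x) Ω)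
    (hblow : ∃ δ > 0, ∀ x ∈ Ω, Metric.infDist x (frontier Ω) < δ →
      m * Metric.infDist x (frontier Ω) ^ (4 - (n : ℝ)) ≤ H x x)
    -- the balancing relation with `(1+o(1))` factors
    (hrel : ∃ u v : ℕ → ℝ, Tendsto u atTop (𝓝 1) ∧ Tendsto v atTop (𝓝 1) ∧
      (fun k => C₁ * H (a k) (a k) * l k ^ (4 - (n : ℝ)) * u k +
          C₂ * ε k * v k)
        =O[atTop] (fun k => Real.log (l k * d k) * (l k * d k) ^ (-(n : ℝ)))) :
    False := by

  classical
  obtain ⟨u, v, hu, hv, hO⟩ := hrel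
  obtain ⟨δ, hδ, hbl⟩ := hblow
  have hnnR : (4 : ℝ) - n ≤ 0 := by
    have : (6 : ℝ) ≤ n := by exact_mod_cast hn
    linarith
  -- frontier is nonempty
  have hne : (frontier Ω).Nonempty := by
    by_contra hfe
    rw [Set.not_nonempty_iff_eq_empty] at hfe
    rcases isClopen_iff.mp (isClopen_iff_frontier_eq_empty.mpr hfe) with h | h
    · exact hΩne.ne_empty h
    · have hnt : Nontrivial (EuclideanSpace ℝ (Fin n)) := by
        refine ⟨EuclideanSpace.single (⟨0, by omega⟩ : Fin n) 1, 0, fun h0 => ?_⟩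
        have := congrArg norm h0
        simp [EuclideanSpace.norm_single] at this
      exact NormedSpace.unbounded_univ ℝ (EuclideanSpace ℝ (Fin n)) (h ▸ hΩb)
  have hdpos : ∀ k, 0 < d k := by
    intro k
    rw [hd k]
    refine (isClosed_frontier.notMem_iff_infDist_pos hne).mp ?_
    intro hmem
    rw [hΩo.frontier_eq] at hmem
    exact hmem.2 (ha k)
  -- the key lower bound on H along the diagonal
  set K : Set (EuclideanSpace ℝ (Fin n)) :=
    closure Ω ∩ {x | δ / 2 ≤ Metric.infDist x (frontier Ω)} with hK
  have hKΩ : K ⊆ Ω := by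
    intro x hx
    by_contra hxΩ
    have hxf : x ∈ frontier Ω := by
      rw [hΩo.frontier_eq]; exact ⟨hx.1, hxΩ⟩
    have h0 : Metric.infDist x (frontier Ω) = 0 := Metric.infDist_zero_of_mem hxf
    have h2 : δ / 2 ≤ Metric.infDist x (frontier Ω) := hx.2
    rw [h0] at h2; linarith
  have hKc : IsCompact K := by
    refine Metric.isCompact_of_isClosed_isBounded ?_ (hΩb.closure.subset (Set.inter_subset_left))
    exact isClosed_closure.inter (isClosed_le continuous_const (Metric.continuous_infDist_pt _))
  have hc : ∃ c > 0, ∀ k, c * d k ^ ((4 : ℝ) - n) ≤ H (a k) (a k) := by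
    by_cases hKne : K.Nonempty
    · obtain ⟨x₀, hx₀K, hmin⟩ := hKc.exists_isMinOn hKne (hφcont.mono hKΩ)
      set μ : ℝ := H x₀ x₀ with hμ
      have hμpos : 0 < μ := hHpos x₀ (hKΩ hx₀K)
      have hδ2 : (0 : ℝ) < δ / 2 := by linarith
      have hδe : (0 : ℝ) < (δ / 2) ^ ((4 : ℝ) - n) := Real.rpow_pos_of_pos hδ2 _
      refine ⟨min m (μ * ((δ / 2) ^ ((4 : ℝ) - n))⁻¹), lt_min hm (by positivity), fun k => ?_⟩
      by_cases hdk : d k < δ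
      · calc min m (μ * ((δ / 2) ^ ((4 : ℝ) - n))⁻¹) * d k ^ ((4 : ℝ) - n)
            ≤ m * d k ^ ((4 : ℝ) - n) := by
              apply mul_le_mul_of_nonneg_right (min_le_left _ _)
              exact Real.rpow_nonneg (hdpos k).le _
          _ ≤ H (a k) (a k) := by
              have := hbl (a k) (ha k) (by rw [← hd k]; exact hdk)
              rw [← hd k] at this; exact this
      · push_neg at hdk
        have hak : a k ∈ K := by
          refine ⟨subset_closure (ha k), ?_⟩
          rw [Set.mem_setOf_eq, ← hd k]; linarith
        have hμle : μ ≤ H (a k) (a k) := isMinOn_iff.mp hmin _ hak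
        have hdle : d k ^ ((4 : ℝ) - n) ≤ (δ / 2) ^ ((4 : ℝ) - n) :=
          Real.rpow_le_rpow_of_nonpos hδ2 (by linarith) hnnR
        calc min m (μ * ((δ / 2) ^ ((4 : ℝ) - n))⁻¹) * d k ^ ((4 : ℝ) - n)
            ≤ μ * ((δ / 2) ^ ((4 : ℝ) - n))⁻¹ * (δ / 2) ^ ((4 : ℝ) - n) := by
              apply mul_le_mul (min_le_right _ _) hdle
                (Real.rpow_nonneg (hdpos k).le _) (by positivity)
          _ = μ := by field_simp
          _ ≤ H (a k) (a k) := hμle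
    · refine ⟨m, hm, fun k => ?_⟩
      have hdk : d k < δ := by
        by_contra hdk
        push_neg at hdk
        exact hKne ⟨a k, subset_closure (ha k), by
          rw [Set.mem_setOf_eq, ← hd k]; linarith⟩
      have := hbl (a k) (ha k) (by rw [← hd k]; exact hdk)
      rw [← hd k] at this; exact this
  obtain ⟨c, hcpos, hc⟩ := hc
  -- extract bound from the big-O relation
  obtain ⟨C, hC⟩ := hO.bound
  set C' : ℝ := max C 1 with hC'
  have hC'pos : 0 < C' := lt_of_lt_of_le one_pos (le_max_right _ _)
  have hcc : 0 < C₁ * c := mul_pos hC₁ hcpos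
  -- eventual facts
  have hu2 : ∀ᶠ k in atTop, (1 : ℝ) / 2 ≤ u k :=
    hu.eventually (eventually_ge_nhds (by norm_num))
  have hv2 : ∀ᶠ k in atTop, (0 : ℝ) ≤ v k :=
    hv.eventually (eventually_ge_nhds (by norm_num))
  have htA : ∀ᶠ k in atTop, max 1 (1 + 2 * C' / (C₁ * c)) ≤ l k * d k :=
    hld.eventually_ge_atTop _
  obtain ⟨k, hCk, huk, hvk, htk⟩ := (hC.and (hu2.and (hv2.and htA))).exists
  set t : ℝ := l k * d k with ht
  have htpos : 0 < t := mul_pos (hlpos k) (hdpos k)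
  have ht1 : (1 : ℝ) ≤ t := le_trans (le_max_left _ _) htk
  have ht2 : 1 + 2 * C' / (C₁ * c) ≤ t := le_trans (le_max_right _ _) htk
  -- lower bound for the left-hand side
  have hHl : c * t ^ ((4 : ℝ) - n) ≤ H (a k) (a k) * l k ^ ((4 : ℝ) - n) := by
    rw [ht, Real.mul_rpow (hlpos k).le (hdpos k).le]
    calc c * (l k ^ ((4 : ℝ) - n) * d k ^ ((4 : ℝ) - n))
        = c * d k ^ ((4 : ℝ) - n) * l k ^ ((4 : ℝ) - n) := by ring
      _ ≤ H (a k) (a k) * l k ^ ((4 : ℝ) - n) :=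
          mul_le_mul_of_nonneg_right (hc k) (Real.rpow_nonneg (hlpos k).le _)
  have hHnn : 0 ≤ H (a k) (a k) := (hHpos _ (ha k)).le
  have hlnn : 0 ≤ l k ^ ((4 : ℝ) - n) := Real.rpow_nonneg (hlpos k).le _
  have hLHS : C₁ * c / 2 * t ^ ((4 : ℝ) - n) ≤
      C₁ * H (a k) (a k) * l k ^ (4 - (n : ℝ)) * u k + C₂ * ε k * v k := by
    have h1 : C₁ * c / 2 * t ^ ((4 : ℝ) - n) ≤ C₁ * H (a k) (a k) * l k ^ (4 - (n : ℝ)) * u k := by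
      have : C₁ * (c * t ^ ((4 : ℝ) - n)) * (1 / 2) ≤
          C₁ * (H (a k) (a k) * l k ^ ((4 : ℝ) - n)) * u k := by
        apply mul_le_mul (mul_le_mul_of_nonneg_left hHl hC₁.le) huk (by norm_num)
        positivity
      calc C₁ * c / 2 * t ^ ((4 : ℝ) - n) = C₁ * (c * t ^ ((4 : ℝ) - n)) * (1 / 2) := by ring
        _ ≤ C₁ * (H (a k) (a k) * l k ^ ((4 : ℝ) - n)) * u k := this
        _ = C₁ * H (a k) (a k) * l k ^ (4 - (n : ℝ)) * u k := by ring
    have h2 : 0 ≤ C₂ * ε k * v k := by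
      have := hεpos k; positivity
    linarith
  -- upper bound from big-O
  have hRHS : ‖Real.log (l k * d k) * (l k * d k) ^ (-(n : ℝ))‖ = Real.log t * t ^ (-(n : ℝ)) := by
    rw [← ht, Real.norm_eq_abs, abs_of_nonneg]
    exact mul_nonneg (Real.log_nonneg ht1) (Real.rpow_nonneg htpos.le _)
  have hchain : C₁ * c / 2 * t ^ ((4 : ℝ) - n) ≤ C' * (Real.log t * t ^ (-(n : ℝ))) := by
    calc C₁ * c / 2 * t ^ ((4 : ℝ) - n)
        ≤ C₁ * H (a k) (a k) * l k ^ (4 - (n : ℝ)) * u k + C₂ * ε k * v k := hLHS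
      _ ≤ ‖C₁ * H (a k) (a k) * l k ^ (4 - (n : ℝ)) * u k + C₂ * ε k * v k‖ :=
          le_abs_self _
      _ ≤ C * ‖Real.log (l k * d k) * (l k * d k) ^ (-(n : ℝ))‖ := hCk
      _ ≤ C' * ‖Real.log (l k * d k) * (l k * d k) ^ (-(n : ℝ))‖ :=
          mul_le_mul_of_nonneg_right (le_max_left _ _) (norm_nonneg _)
      _ = C' * (Real.log t * t ^ (-(n : ℝ))) := by rw [hRHS]
  -- but the left side is strictly larger
  have hlog : Real.log t ≤ t := Real.log_le_self htpos.le
  have hub : C' * (Real.log t * t ^ (-(n : ℝ))) ≤ C' * t * t ^ (-(n : ℝ)) := by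
    have hrn : 0 ≤ t ^ (-(n : ℝ)) := Real.rpow_nonneg htpos.le _
    calc C' * (Real.log t * t ^ (-(n : ℝ))) = C' * Real.log t * t ^ (-(n : ℝ)) := by ring
      _ ≤ C' * t * t ^ (-(n : ℝ)) :=
          mul_le_mul_of_nonneg_right (mul_le_mul_of_nonneg_left hlog hC'pos.le) hrn
  have hsplit : t ^ ((4 : ℝ) - n) = t ^ (3 : ℝ) * (t * t ^ (-(n : ℝ))) := by
    rw [show t * t ^ (-(n : ℝ)) = t ^ (1 + -(n : ℝ)) by
        rw [Real.rpow_add htpos, Real.rpow_one], ← Real.rpow_add htpos]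
    congr 1
    ring
  have ht3 : t ≤ t ^ (3 : ℝ) := by
    calc t = t ^ (1 : ℝ) := (Real.rpow_one t).symm
      _ ≤ t ^ (3 : ℝ) := Real.rpow_le_rpow_of_exponent_le ht1 (by norm_num)
  have htgt : 2 * C' / (C₁ * c) < t := by
    have : 0 < 2 * C' / (C₁ * c) := by positivity
    linarith
  have hkey : C' < C₁ * c / 2 * t ^ (3 : ℝ) := by
    have h1 : 2 * C' < C₁ * c * t := by
      rw [div_lt_iff₀ hcc] at htgt; linarith
    nlinarith [mul_le_mul_of_nonneg_left ht3 hcc.le]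
  have hfinal : C' * (t * t ^ (-(n : ℝ))) < C₁ * c / 2 * t ^ ((4 : ℝ) - n) := by
    rw [hsplit]
    have hpos : 0 < t * t ^ (-(n : ℝ)) := mul_pos htpos (Real.rpow_pos_of_pos htpos _)
    calc C' * (t * t ^ (-(n : ℝ))) < C₁ * c / 2 * t ^ (3 : ℝ) * (t * t ^ (-(n : ℝ))) :=
          mul_lt_mul_of_pos_right hkey hpos
      _ = C₁ * c / 2 * (t ^ (3 : ℝ) * (t * t ^ (-(n : ℝ)))) := by ring
  have : C' * (t * t ^ (-(n : ℝ))) = C' * t * t ^ (-(n : ℝ)) := by ring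
  linarith [hchain, hub]
end
end
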